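/- Let V_1,…,V_d be real n×n matrices, let x, ρ : [0,T] → ℝ^d be continuously differentiable, and let Y : ℝ × [0,T] → M_n(ℝ) be such that for every ε ∈ ℝ: Y(ε, 0) = I, the map t ↦ Y(ε,t) is continuous, and for every t ∈ [0,T], ∂_t Y(ε,t) = Y(ε,t)·( Σ_{k=1}^d ((x^k)′(t) + ε (ρ^k)′(t)) V_k ). Write y(t) := Y(0,t) (so each y(s) is invertible). Then for every t ∈ [0,T], the map ε ↦ Y(ε,t) is differentiable at ε = 0 with derivative ( ∫_0^t y(s)·( Σ_{k=1}^d (ρ^k)′(s) V_k )·y(s)⁻¹ ds ) · y(t). -/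

import Mathlib

attribute [local instance] Matrix.normedAddCommGroup Matrix.normedSpace

open Set MeasureTheory intervalIntegral Real Matrix

namespace VariationAux

variable {n : ℕ}

lemma norm_matMul_le (A B : Matrix (Fin n) (Fin n) ℝ) :
    ‖A * B‖ ≤ (n : ℝ) * ‖A‖ * ‖B‖ := by
  have h0 : (0:ℝ) ≤ (n:ℝ) * ‖A‖ * ‖B‖ := by positivity
  rw [Matrix.norm_le_iff h0]
  intro i j
  rw [Matrix.mul_apply]
  calc ‖∑ k, A i k * B k j‖ ≤ ∑ k, ‖A i k * B k j‖ := norm_sum_le _ _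
    _ ≤ ∑ _k : Fin n, ‖A‖ * ‖B‖ := Finset.sum_le_sum (fun k _ => by
        rw [norm_mul]
        exact mul_le_mul (Matrix.norm_entry_le_entrywise_sup_norm A)
          (Matrix.norm_entry_le_entrywise_sup_norm B) (norm_nonneg _) (norm_nonneg _))
    _ = (n:ℝ) * ‖A‖ * ‖B‖ := by simp [Finset.sum_const, mul_assoc]

lemma norm_vecMul_le (v : Fin n → ℝ) (A : Matrix (Fin n) (Fin n) ℝ) :
    ‖v ᵥ* A‖ ≤ ((n : ℝ) * ‖v‖) * ‖A‖ := by
  have h0 : (0:ℝ) ≤ (n:ℝ) * ‖v‖ * ‖A‖ := by positivity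
  rw [pi_norm_le_iff_of_nonneg h0]
  intro j
  show ‖∑ i, v i * A i j‖ ≤ _
  calc ‖∑ i, v i * A i j‖ ≤ ∑ i, ‖v i * A i j‖ := norm_sum_le _ _
    _ ≤ ∑ _i : Fin n, ‖v‖ * ‖A‖ := Finset.sum_le_sum (fun i _ => by
        rw [norm_mul]
        exact mul_le_mul (norm_le_pi_norm v i)
          (Matrix.norm_entry_le_entrywise_sup_norm A) (norm_nonneg _) (norm_nonneg _))
    _ = (n:ℝ) * ‖v‖ * ‖A‖ := by simp [Finset.sum_const, mul_assoc]

noncomputable def mulCLM (n : ℕ) :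
    Matrix (Fin n) (Fin n) ℝ →L[ℝ] Matrix (Fin n) (Fin n) ℝ →L[ℝ] Matrix (Fin n) (Fin n) ℝ :=
  LinearMap.mkContinuous₂ (LinearMap.mul ℝ _) n fun A B => by
    simpa using norm_matMul_le A B

@[simp] lemma mulCLM_apply (A B : Matrix (Fin n) (Fin n) ℝ) : mulCLM n A B = A * B := rfl

lemma hdMul {u v : ℝ → Matrix (Fin n) (Fin n) ℝ} {u' v' : Matrix (Fin n) (Fin n) ℝ}
    {s : Set ℝ} {t : ℝ}
    (hu : HasDerivWithinAt u u' s t) (hv : HasDerivWithinAt v v' s t) :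
    HasDerivWithinAt (fun r => u r * v r) (u' * v t + u t * v') s t := by
  letI : NormedRing (Matrix (Fin n) (Fin n) ℝ) := Matrix.linftyOpNormedRing
  letI : NormedAlgebra ℝ (Matrix (Fin n) (Fin n) ℝ) := Matrix.linftyOpNormedAlgebra
  exact hu.mul hv

noncomputable def vecMulCLM (v : Fin n → ℝ) :
    Matrix (Fin n) (Fin n) ℝ →L[ℝ] (Fin n → ℝ) :=
  LinearMap.mkContinuous
    { toFun := fun A => v ᵥ* A
      map_add' := fun A B => Matrix.vecMul_add A B v
      map_smul' := fun c A => by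
        ext j
        simp only [Matrix.vecMul, dotProduct, Matrix.smul_apply, smul_eq_mul,
          RingHom.id_apply, Pi.smul_apply, Finset.mul_sum]
        exact Finset.sum_congr rfl fun i _ => by ring }
    ((n : ℝ) * ‖v‖) fun A => norm_vecMul_le v A

@[simp] lemma vecMulCLM_apply (v : Fin n → ℝ) (A : Matrix (Fin n) (Fin n) ℝ) :
    vecMulCLM v A = v ᵥ* A := rfl

lemma upgrade {E : Type*} [NormedAddCommGroup E] [NormedSpace ℝ E] {T s : ℝ}
    {f : ℝ → E} {d : E} (h : HasDerivWithinAt f d (Icc 0 T) s) (hs : 0 ≤ s) (hsT : s < T) :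
    HasDerivWithinAt f d (Ici s) s :=
  (h.mono (Icc_subset_Icc hs le_rfl)).mono_of_mem_nhdsWithin
    (Icc_mem_nhdsGE_of_mem ⟨le_rfl, hsT⟩)

lemma gb_le {δ K c x T' : ℝ} (hδ : 0 ≤ δ) (hK : 0 < K) (hc : 0 ≤ c) (hxT : x ≤ T') :
    gronwallBound δ K c x ≤ (δ + c / K) * Real.exp (K * T') := by
  rw [gronwallBound_of_K_ne_0 hK.ne']
  have he : Real.exp (K*x) ≤ Real.exp (K*T') :=
    Real.exp_le_exp.2 (mul_le_mul_of_nonneg_left hxT hK.le)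
  have h1 : δ * Real.exp (K*x) ≤ δ * Real.exp (K*T') := mul_le_mul_of_nonneg_left he hδ
  have h2 : c / K * (Real.exp (K*x) - 1) ≤ c / K * Real.exp (K*T') := by
    apply mul_le_mul_of_nonneg_left _ (div_nonneg hc hK.le)
    linarith
  nlinarith

end VariationAux

set_option maxHeartbeats 4000000 in
open VariationAux Set MeasureTheory intervalIntegral Matrix in
/-- **Variation formula for perturbed left linear matrix ODEs.**
Let `Y (ε, ·)` solve `Y(ε,0) = I`, `∂ₜ Y(ε,t) = Y(ε,t) * (∑ k, ((xᵏ)'(t) + ε (ρᵏ)'(t)) • V k)`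
on `[0,T]`, with `x, ρ` continuously differentiable, and write `y := Y 0`. Then for every
`t ∈ [0,T]` the map `ε ↦ Y (ε, t)` is differentiable at `ε = 0` with derivative
`(∫₀ᵗ y s * (∑ k, (ρᵏ)'(s) • V k) * (y s)⁻¹ ds) * y t` (the integrand is `Ad_{y s}` applied to
`∑ k (ρᵏ)'(s) V k`). -/
theorem variation_of_perturbed_left_linear_ode {n d : ℕ}
    (V : Fin d → Matrix (Fin n) (Fin n) ℝ) (T : ℝ) (hT : 0 < T)
    (x ρ x' ρ' : ℝ → Fin d → ℝ)
    (hx'cont : ContinuousOn x' (Set.Icc 0 T))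
    (hρ'cont : ContinuousOn ρ' (Set.Icc 0 T))
    (hx : ∀ t ∈ Set.Icc (0 : ℝ) T, ∀ k,
      HasDerivWithinAt (fun u => x u k) (x' t k) (Set.Icc 0 T) t)
    (hρ : ∀ t ∈ Set.Icc (0 : ℝ) T, ∀ k,
      HasDerivWithinAt (fun u => ρ u k) (ρ' t k) (Set.Icc 0 T) t)
    (Y : ℝ → ℝ → Matrix (Fin n) (Fin n) ℝ)
    (hY0 : ∀ ε : ℝ, Y ε 0 = 1)
    (hYcont : ∀ ε : ℝ, ContinuousOn (Y ε) (Set.Icc 0 T))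
    (hYderiv : ∀ ε : ℝ, ∀ t ∈ Set.Icc (0 : ℝ) T,
      HasDerivWithinAt (Y ε)
        (Y ε t * ∑ k, (x' t k + ε * ρ' t k) • V k) (Set.Icc 0 T) t) :
    ∀ t ∈ Set.Icc (0 : ℝ) T,
      HasDerivAt (fun ε => Y ε t)
        ((∫ s in (0 : ℝ)..t, Y 0 s * (∑ k, ρ' s k • V k) * (Y 0 s)⁻¹) * Y 0 t) 0 := by
  classical
  rcases Nat.eq_zero_or_pos n with hn0 | hn0
  · subst hn0
    intro t₀ ht₀
    have h1 : (fun ε => Y ε t₀) = fun _ => Y 0 t₀ := funext fun ε => Subsingleton.elim _ _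
    have h3 : ((∫ s in (0:ℝ)..t₀, Y 0 s * (∑ k, ρ' s k • V k) * (Y 0 s)⁻¹) * Y 0 t₀)
        = 0 := Subsingleton.elim _ _
    rw [h1, h3]
    exact hasDerivAt_const (0:ℝ) (Y 0 t₀)
  intro t₀ ht₀
  set y : ℝ → Matrix (Fin n) (Fin n) ℝ := Y 0 with hydef
  set A : ℝ → Matrix (Fin n) (Fin n) ℝ := fun s => ∑ k, x' s k • V k with hAdef
  set R : ℝ → Matrix (Fin n) (Fin n) ℝ := fun s => ∑ k, ρ' s k • V k with hRdef
  -- reformulated derivative hypothesis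
  have hYd : ∀ ε : ℝ, ∀ s ∈ Icc (0:ℝ) T,
      HasDerivWithinAt (Y ε) (Y ε s * (A s + ε • R s)) (Icc 0 T) s := by
    intro ε s hs
    have h := hYderiv ε s hs
    have he : (∑ k, (x' s k + ε * ρ' s k) • V k) = A s + ε • R s := by
      rw [hAdef, hRdef]
      simp only [Finset.smul_sum]
      rw [← Finset.sum_add_distrib]
      exact Finset.sum_congr rfl fun k _ => by rw [add_smul, smul_smul]
    rwa [he] at h
  have hyd : ∀ s ∈ Icc (0:ℝ) T, HasDerivWithinAt y (y s * A s) (Icc 0 T) s := by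
    intro s hs
    simpa using hYd 0 s hs
  -- continuity of A, R
  have hAcont : ContinuousOn A (Icc 0 T) := by
    apply continuousOn_finset_sum
    intro k _
    exact (((continuous_apply k).comp_continuousOn hx'cont)).smul continuousOn_const
  have hRcont : ContinuousOn R (Icc 0 T) := by
    apply continuousOn_finset_sum
    intro k _
    exact (((continuous_apply k).comp_continuousOn hρ'cont)).smul continuousOn_const
  -- bounds
  obtain ⟨MA0, hMA0⟩ := isCompact_Icc.exists_bound_of_continuousOn hAcont
  obtain ⟨MR0, hMR0⟩ := isCompact_Icc.exists_bound_of_continuousOn hRcont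
  set MA : ℝ := max MA0 0 with hMAdef
  set MR : ℝ := max MR0 0 + 1 with hMRdef
  have hMA : ∀ s ∈ Icc (0:ℝ) T, ‖A s‖ ≤ MA := fun s hs => (hMA0 s hs).trans (le_max_left _ _)
  have hMR : ∀ s ∈ Icc (0:ℝ) T, ‖R s‖ ≤ MR := fun s hs =>
    (hMR0 s hs).trans ((le_max_left _ _).trans (by linarith))
  have hMApos : 0 ≤ MA := le_max_right _ _
  have hMRpos : 0 < MR := by positivity
  set K : ℝ := (n : ℝ) * (MA + MR) with hKdef
  have hK : 0 < K := by
    have : (1:ℝ) ≤ (n:ℝ) := by exact_mod_cast hn0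
    nlinarith
  -- generic Gronwall application on [0, b] ⊆ [0, T]
  have gron : ∀ (f f' : ℝ → Matrix (Fin n) (Fin n) ℝ) (b δ c : ℝ), b ∈ Icc (0:ℝ) T →
      0 ≤ δ → 0 ≤ c →
      ContinuousOn f (Icc 0 T) → (∀ s ∈ Icc (0:ℝ) T, HasDerivWithinAt f (f' s) (Icc 0 T) s) →
      ‖f 0‖ ≤ δ → (∀ s ∈ Ico (0:ℝ) b, ‖f' s‖ ≤ K * ‖f s‖ + c) →
      ‖f b‖ ≤ (δ + c / K) * Real.exp (K * T) := by
    intro f f' b δ c hb hδ hc hfc hfd h0 hbd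
    have hmain := norm_le_gronwallBound_of_norm_deriv_right_le (a := 0) (b := b) (f := f)
      (f' := f') (δ := δ) (K := K) (ε := c)
      (hfc.mono (Icc_subset_Icc le_rfl hb.2))
      (fun s hs => upgrade (hfd s ⟨hs.1, hs.2.le.trans hb.2⟩) hs.1 (lt_of_lt_of_le hs.2 hb.2))
      h0 hbd
    have := hmain b ⟨hb.1, le_rfl⟩
    rw [sub_zero] at this
    exact this.trans (gb_le hδ hK hc hb.2)
  -- uniform bound on Y ε for |ε| ≤ 1
  set CY : ℝ := (‖(1 : Matrix (Fin n) (Fin n) ℝ)‖ + 0 / K) * Real.exp (K * T) with hCYdef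
  have hCYpos : 0 ≤ CY := by positivity
  have hCY : ∀ ε : ℝ, |ε| ≤ 1 → ∀ s ∈ Icc (0:ℝ) T, ‖Y ε s‖ ≤ CY := by
    intro ε hε s hs
    apply gron (Y ε) (fun r => Y ε r * (A r + ε • R r)) s ‖(1 : Matrix (Fin n) (Fin n) ℝ)‖ 0 hs
      (norm_nonneg _) le_rfl (hYcont ε) (hYd ε) (by rw [hY0 ε])
    intro r hr
    have hrT : r ∈ Icc (0:ℝ) T := ⟨hr.1, hr.2.le.trans hs.2⟩
    have h1 : ‖Y ε r * (A r + ε • R r)‖ ≤ (n:ℝ) * ‖Y ε r‖ * ‖A r + ε • R r‖ :=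
      norm_matMul_le _ _
    have h2 : ‖A r + ε • R r‖ ≤ MA + MR := by
      calc ‖A r + ε • R r‖ ≤ ‖A r‖ + ‖ε • R r‖ := norm_add_le _ _
        _ ≤ MA + MR := by
            rw [norm_smul]
            have : ‖ε‖ * ‖R r‖ ≤ 1 * MR :=
              mul_le_mul hε (hMR r hrT) (norm_nonneg _) zero_le_one
            have h3 := hMA r hrT
            rw [one_mul] at this
            linarith
    calc ‖Y ε r * (A r + ε • R r)‖ ≤ (n:ℝ) * ‖Y ε r‖ * (MA + MR) := by
          refine h1.trans ?_
          have : (0:ℝ) ≤ (n:ℝ) * ‖Y ε r‖ := by positivity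
          exact mul_le_mul_of_nonneg_left h2 this
      _ = K * ‖Y ε r‖ + 0 := by rw [hKdef]; ring
  -- invertibility of y s
  have hunit : ∀ s ∈ Icc (0:ℝ) T, IsUnit (y s) := by
    intro s₀ hs₀
    rcases eq_or_lt_of_le hs₀.1 with h0 | h0
    · rw [hydef, ← h0, hY0 0]
      exact isUnit_one
    · rw [← Matrix.vecMul_injective_iff_isUnit]
      intro v w hvw
      have hsub : ∀ u : Fin n → ℝ, u ᵥ* (y s₀) = 0 → u = 0 := by
        intro u hu
        set φ : ℝ → (Fin n → ℝ) := fun r => u ᵥ* y (s₀ - r) with hφdef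
        have hmaps : ∀ r ∈ Icc (0:ℝ) s₀, s₀ - r ∈ Icc (0:ℝ) T := by
          intro r hr
          constructor <;> [linarith [hr.2]; linarith [hr.1, hs₀.2]]
        have hφcont : ContinuousOn φ (Icc 0 s₀) := by
          apply (vecMulCLM u).continuous.comp_continuousOn
          exact (hYcont 0).comp (continuous_const.sub continuous_id).continuousOn hmaps
        have hφd : ∀ r ∈ Ico (0:ℝ) s₀,
            HasDerivWithinAt φ (-(φ r ᵥ* A (s₀ - r))) (Ici r) r := by
          intro r hr
          have hmem : s₀ - r ∈ Icc (0:ℝ) T := hmaps r ⟨hr.1, hr.2.le⟩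
          have hg : HasDerivWithinAt (fun u : ℝ => s₀ - u) (-1) (Icc r s₀) r :=
            (hasDerivWithinAt_id r _).const_sub s₀
          have hmaps2 : MapsTo (fun u : ℝ => s₀ - u) (Icc r s₀) (Icc 0 T) := by
            intro a ha
            have h1 := ha.1
            have h2 := ha.2
            show s₀ - a ∈ Icc (0:ℝ) T
            constructor <;> [linarith; linarith [hs₀.2, hr.1]]
          have hcomp := HasDerivWithinAt.scomp r (hyd (s₀ - r) hmem) hg hmaps2
          have hclm := (vecMulCLM u).hasFDerivAt.comp_hasDerivWithinAt r hcomp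
          have hup : HasDerivWithinAt (fun r' => vecMulCLM u ((y ∘ fun u : ℝ => s₀ - u) r'))
              (vecMulCLM u ((-1 : ℝ) • (y (s₀ - r) * A (s₀ - r)))) (Ici r) r :=
            hclm.mono_of_mem_nhdsWithin (Icc_mem_nhdsGE_of_mem ⟨le_rfl, hr.2⟩)
          have heq : (vecMulCLM u ((-1 : ℝ) • (y (s₀ - r) * A (s₀ - r))))
              = -(φ r ᵥ* A (s₀ - r)) := by
            simp [hφdef, Matrix.vecMul_vecMul, Matrix.vecMul_neg]
          rw [heq] at hup
          exact hup
        have hbd : ∀ r ∈ Ico (0:ℝ) s₀, ‖-(φ r ᵥ* A (s₀ - r))‖ ≤ K * ‖φ r‖ + 0 := by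
          intro r hr
          rw [norm_neg]
          have hmem : s₀ - r ∈ Icc (0:ℝ) T := hmaps r ⟨hr.1, hr.2.le⟩
          calc ‖φ r ᵥ* A (s₀ - r)‖ ≤ ((n:ℝ) * ‖φ r‖) * ‖A (s₀ - r)‖ := norm_vecMul_le _ _
            _ ≤ ((n:ℝ) * ‖φ r‖) * MA := by
                refine mul_le_mul_of_nonneg_left (hMA _ hmem) ?_
                positivity
            _ ≤ K * ‖φ r‖ + 0 := by
                rw [add_zero, hKdef]
                nlinarith [mul_nonneg (mul_nonneg (Nat.cast_nonneg n : (0:ℝ) ≤ n)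
                  (norm_nonneg (φ r))) hMRpos.le]
        have hφ0 : ‖φ 0‖ ≤ 0 := by
          rw [hφdef]
          simp only [sub_zero, hu]
          simp
        have := norm_le_gronwallBound_of_norm_deriv_right_le (a := 0) (b := s₀)
          hφcont hφd hφ0 hbd s₀ ⟨hs₀.1, le_rfl⟩
        rw [sub_zero, gronwallBound_ε0_δ0] at this
        have hφs₀ : φ s₀ = u := by
          rw [hφdef]
          simp only [sub_self]
          rw [hydef, hY0 0, Matrix.vecMul_one]
        rw [hφs₀] at this
        exact norm_le_zero_iff.1 this
      have hvw' : v ᵥ* y s₀ = w ᵥ* y s₀ := hvw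
      have := hsub (v - w) (by rw [Matrix.sub_vecMul, hvw', sub_self])
      exact sub_eq_zero.1 this
  -- determinant nonvanishing and continuity of the inverse
  have hdet : ∀ s ∈ Icc (0:ℝ) T, IsUnit (y s).det :=
    fun s hs => (Matrix.isUnit_iff_isUnit_det _).1 (hunit s hs)
  have hdet' : ∀ s ∈ Icc (0:ℝ) T, (y s).det ≠ 0 :=
    fun s hs => isUnit_iff_ne_zero.1 (hdet s hs)
  have hyinvcont : ContinuousOn (fun s => (y s)⁻¹) (Icc 0 T) := by
    have h1 : ContinuousOn (fun s => (y s).det) (Icc 0 T) :=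
      (continuous_id.matrix_det).comp_continuousOn (hYcont 0)
    have h2 : ContinuousOn (fun s => (y s).adjugate) (Icc 0 T) :=
      (continuous_id.matrix_adjugate).comp_continuousOn (hYcont 0)
    have h3 : ContinuousOn (fun s => ((y s).det)⁻¹ • (y s).adjugate) (Icc 0 T) :=
      (h1.inv₀ hdet').smul h2
    exact h3.congr fun s hs => by rw [Matrix.inv_def, Ring.inverse_eq_inv']
  have hmulCO : ∀ {f g : ℝ → Matrix (Fin n) (Fin n) ℝ}, ContinuousOn f (Icc 0 T) →
      ContinuousOn g (Icc 0 T) → ContinuousOn (fun r => f r * g r) (Icc 0 T) := by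
    intro f g hf hg
    exact (continuous_fst.matrix_mul continuous_snd).comp_continuousOn (hf.prodMk hg)
  set B : ℝ → Matrix (Fin n) (Fin n) ℝ := fun s => y s * R s * (y s)⁻¹ with hBdef
  have hBcont : ContinuousOn B (Icc 0 T) := hmulCO (hmulCO (hYcont 0) hRcont) hyinvcont
  letI : ENormedAddMonoid (Matrix (Fin n) (Fin n) ℝ) :=
    inferInstanceAs (ENormedAddMonoid (Fin n → Fin n → ℝ))
  haveI : TopologicalSpace.PseudoMetrizableSpace (Matrix (Fin n) (Fin n) ℝ) :=
    inferInstanceAs (TopologicalSpace.PseudoMetrizableSpace (Fin n → Fin n → ℝ))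
  have hBint : ∀ u ∈ Icc (0:ℝ) T, IntervalIntegrable B MeasureTheory.volume 0 u := by
    intro u hu
    apply ContinuousOn.intervalIntegrable
    rw [uIcc_of_le hu.1]
    exact hBcont.mono (Icc_subset_Icc le_rfl hu.2)
  have hId : ∀ s ∈ Icc (0:ℝ) T,
      HasDerivWithinAt (fun u => ∫ r in (0:ℝ)..u, B r) (B s) (Icc 0 T) s := by
    intro s hs
    haveI : Fact (s ∈ Icc (0:ℝ) T) := ⟨hs⟩
    exact intervalIntegral.integral_hasDerivWithinAt_right (hBint s hs)
      (hBcont.stronglyMeasurableAtFilter_nhdsWithin measurableSet_Icc s)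
      (hBcont s hs)
  set ψ : ℝ → Matrix (Fin n) (Fin n) ℝ := fun u => (∫ r in (0:ℝ)..u, B r) * y u with hψdef
  have hψd : ∀ s ∈ Icc (0:ℝ) T,
      HasDerivWithinAt ψ (y s * R s + (∫ r in (0:ℝ)..s, B r) * (y s * A s)) (Icc 0 T) s := by
    intro s hs
    have h := hdMul (hId s hs) (hyd s hs)
    have hBy : B s * y s = y s * R s := by
      show (y s * R s * (y s)⁻¹) * y s = y s * R s
      rw [mul_assoc, Matrix.nonsing_inv_mul _ (hdet s hs), mul_one]
    rw [hBy] at h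
    exact h
  have hψcont : ContinuousOn ψ (Icc 0 T) := fun s hs => (hψd s hs).continuousWithinAt
  have hψ0 : ψ 0 = 0 := by
    show (∫ r in (0:ℝ)..(0:ℝ), B r) * y 0 = 0
    rw [intervalIntegral.integral_same, zero_mul]
  -- first-order Gronwall estimate: ‖Y ε s - y s‖ ≤ |ε| C₂
  set C₂ : ℝ := (n:ℝ) * CY * MR / K * Real.exp (K * T) with hC₂def
  have hC₂pos : 0 ≤ C₂ := by
    rw [hC₂def]
    exact mul_nonneg (div_nonneg (mul_nonneg (mul_nonneg
      (Nat.cast_nonneg n) hCYpos) hMRpos.le) hK.le) (Real.exp_pos _).le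
  have hΔd : ∀ (ε : ℝ), ∀ s ∈ Icc (0:ℝ) T, HasDerivWithinAt (fun r => Y ε r - y r)
      ((Y ε s - y s) * A s + ε • (Y ε s * R s)) (Icc 0 T) s := by
    intro ε s hs
    have h := (hYd ε s hs).sub (hyd s hs)
    have halg : Y ε s * (A s + ε • R s) - y s * A s
        = (Y ε s - y s) * A s + ε • (Y ε s * R s) := by
      rw [mul_add, sub_mul, mul_smul_comm]
      abel
    rwa [halg] at h
  have hΔ : ∀ ε : ℝ, |ε| ≤ 1 → ∀ s ∈ Icc (0:ℝ) T, ‖Y ε s - y s‖ ≤ |ε| * C₂ := by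
    intro ε hε s hs
    have h := gron (fun r => Y ε r - y r)
      (fun r => (Y ε r - y r) * A r + ε • (Y ε r * R r))
      s 0 (|ε| * ((n:ℝ) * CY * MR)) hs le_rfl
      (mul_nonneg (abs_nonneg ε) (mul_nonneg (mul_nonneg
        (Nat.cast_nonneg n) hCYpos) hMRpos.le))
      ((hYcont ε).sub (hYcont 0))
      (fun r hr => hΔd ε r hr)
      (by show ‖Y ε 0 - Y 0 0‖ ≤ 0
          rw [hY0 ε, hY0 0, sub_self, norm_zero])
      (by
        intro r hr
        have hrT : r ∈ Icc (0:ℝ) T := ⟨hr.1, hr.2.le.trans hs.2⟩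
        have h1 : ‖(Y ε r - y r) * A r‖ ≤ K * ‖Y ε r - y r‖ := by
          refine (norm_matMul_le _ _).trans ?_
          have h2 : (n:ℝ) * ‖Y ε r - y r‖ * ‖A r‖ ≤ (n:ℝ) * ‖Y ε r - y r‖ * MA :=
            mul_le_mul_of_nonneg_left (hMA r hrT) (by positivity)
          refine h2.trans ?_
          rw [hKdef]
          nlinarith [mul_nonneg (mul_nonneg (Nat.cast_nonneg n : (0:ℝ) ≤ n)
            (norm_nonneg (Y ε r - y r))) hMRpos.le]
        have h2 : ‖ε • (Y ε r * R r)‖ ≤ |ε| * ((n:ℝ) * CY * MR) := by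
          rw [norm_smul, Real.norm_eq_abs]
          refine mul_le_mul_of_nonneg_left ?_ (abs_nonneg ε)
          refine (norm_matMul_le _ _).trans ?_
          have hy1 : ‖Y ε r‖ ≤ CY := hCY ε hε r hrT
          have hr1 : ‖R r‖ ≤ MR := hMR r hrT
          exact mul_le_mul (mul_le_mul_of_nonneg_left hy1 (Nat.cast_nonneg n)) hr1
            (norm_nonneg _) (mul_nonneg (Nat.cast_nonneg n) hCYpos)
        calc ‖(Y ε r - y r) * A r + ε • (Y ε r * R r)‖
            ≤ ‖(Y ε r - y r) * A r‖ + ‖ε • (Y ε r * R r)‖ := norm_add_le _ _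
          _ ≤ K * ‖Y ε r - y r‖ + |ε| * ((n:ℝ) * CY * MR) := add_le_add h1 h2)
    have heq : (0 + |ε| * ((n:ℝ) * CY * MR) / K) * Real.exp (K * T) = |ε| * C₂ := by
      rw [hC₂def]; ring
    rwa [heq] at h
  -- second-order Gronwall estimate
  set C₄ : ℝ := C₂ * MR * (n:ℝ) / K * Real.exp (K * T) with hC₄def
  have hC₄pos : 0 ≤ C₄ := by
    rw [hC₄def]
    exact mul_nonneg (div_nonneg (mul_nonneg (mul_nonneg
      hC₂pos hMRpos.le) (Nat.cast_nonneg n)) hK.le) (Real.exp_pos _).le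
  have key : ∀ ε : ℝ, |ε| ≤ 1 → ‖Y ε t₀ - y t₀ - ε • ψ t₀‖ ≤ ε^2 * C₄ := by
    intro ε hε
    have hgd : ∀ s ∈ Icc (0:ℝ) T, HasDerivWithinAt (fun r => Y ε r - y r - ε • ψ r)
        ((Y ε s - y s - ε • ψ s) * A s + ε • ((Y ε s - y s) * R s)) (Icc 0 T) s := by
      intro s hs
      have h := ((hYd ε s hs).sub (hyd s hs)).sub ((hψd s hs).const_smul ε)
      have hψs : ψ s = (∫ r in (0:ℝ)..s, B r) * y s := rfl
      have halg : Y ε s * (A s + ε • R s) - y s * A s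
          - ε • (y s * R s + (∫ r in (0:ℝ)..s, B r) * (y s * A s))
          = (Y ε s - y s - ε • ψ s) * A s + ε • ((Y ε s - y s) * R s) := by
        simp only [hψs, mul_add, sub_mul, smul_mul_assoc, mul_smul_comm, smul_sub,
          smul_add, mul_assoc]
        abel
      rwa [halg] at h
    have h := gron (fun r => Y ε r - y r - ε • ψ r)
      (fun s => (Y ε s - y s - ε • ψ s) * A s + ε • ((Y ε s - y s) * R s))
      t₀ 0 (ε^2 * (C₂ * MR * (n:ℝ))) ht₀ le_rfl
      (mul_nonneg (sq_nonneg ε) (mul_nonneg (mul_nonneg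
        hC₂pos hMRpos.le) (Nat.cast_nonneg n)))
      (((hYcont ε).sub (hYcont 0)).sub (hψcont.const_smul ε))
      hgd
      (by show ‖Y ε 0 - Y 0 0 - ε • ψ 0‖ ≤ 0
          rw [hY0 ε, hY0 0, hψ0, smul_zero, sub_zero, sub_self, norm_zero])
      (by
        intro r hr
        have hrT : r ∈ Icc (0:ℝ) T := ⟨hr.1, hr.2.le.trans ht₀.2⟩
        have h1 : ‖(Y ε r - y r - ε • ψ r) * A r‖ ≤ K * ‖Y ε r - y r - ε • ψ r‖ := by
          refine (norm_matMul_le _ _).trans ?_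
          have h2 : (n:ℝ) * ‖Y ε r - y r - ε • ψ r‖ * ‖A r‖
              ≤ (n:ℝ) * ‖Y ε r - y r - ε • ψ r‖ * MA :=
            mul_le_mul_of_nonneg_left (hMA r hrT) (by positivity)
          refine h2.trans ?_
          rw [hKdef]
          nlinarith [mul_nonneg (mul_nonneg (Nat.cast_nonneg n : (0:ℝ) ≤ n)
            (norm_nonneg (Y ε r - y r - ε • ψ r))) hMRpos.le]
        have h2 : ‖ε • ((Y ε r - y r) * R r)‖ ≤ ε^2 * (C₂ * MR * (n:ℝ)) := by
          rw [norm_smul, Real.norm_eq_abs]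
          have h3 : ‖(Y ε r - y r) * R r‖ ≤ (n:ℝ) * (|ε| * C₂) * MR := by
            refine (norm_matMul_le _ _).trans ?_
            have hd1 : ‖Y ε r - y r‖ ≤ |ε| * C₂ := hΔ ε hε r hrT
            have hr1 : ‖R r‖ ≤ MR := hMR r hrT
            exact mul_le_mul (mul_le_mul_of_nonneg_left hd1 (Nat.cast_nonneg n)) hr1
              (norm_nonneg _) (mul_nonneg (Nat.cast_nonneg n)
                (mul_nonneg (abs_nonneg ε) hC₂pos))
          have h4 : |ε| * ‖(Y ε r - y r) * R r‖ ≤ |ε| * ((n:ℝ) * (|ε| * C₂) * MR) :=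
            mul_le_mul_of_nonneg_left h3 (abs_nonneg ε)
          refine h4.trans (le_of_eq ?_)
          rw [← sq_abs]
          ring
        calc ‖(Y ε r - y r - ε • ψ r) * A r + ε • ((Y ε r - y r) * R r)‖
            ≤ ‖(Y ε r - y r - ε • ψ r) * A r‖ + ‖ε • ((Y ε r - y r) * R r)‖ :=
              norm_add_le _ _
          _ ≤ K * ‖Y ε r - y r - ε • ψ r‖ + ε^2 * (C₂ * MR * (n:ℝ)) := add_le_add h1 h2)
    have heq : (0 + ε^2 * (C₂ * MR * (n:ℝ)) / K) * Real.exp (K * T) = ε^2 * C₄ := by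
      rw [hC₄def]; ring
    rwa [heq] at h
  -- conclusion
  show HasDerivAt (fun ε => Y ε t₀) (ψ t₀) 0
  refine hasDerivAt_iff_isLittleO.2 ?_
  rw [Asymptotics.isLittleO_iff]
  intro c hc
  have hC₄1 : (0:ℝ) < C₄ + 1 := by linarith
  have hmin : 0 < min 1 (c / (C₄ + 1)) := lt_min one_pos (div_pos hc hC₄1)
  filter_upwards [Metric.closedBall_mem_nhds (0:ℝ) hmin] with ε hεball
  rw [Metric.mem_closedBall, Real.dist_eq, sub_zero] at hεball
  have hε1 : |ε| ≤ 1 := hεball.trans (min_le_left _ _)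
  have hε2 : |ε| ≤ c / (C₄ + 1) := hεball.trans (min_le_right _ _)
  rw [le_div_iff₀ hC₄1] at hε2
  have hk := key ε hε1
  simp only [sub_zero]
  rw [Real.norm_eq_abs]
  have h3 : |ε| * (|ε| * (C₄ + 1)) ≤ |ε| * c := by
    refine mul_le_mul_of_nonneg_left ?_ (abs_nonneg ε)
    calc |ε| * (C₄ + 1) = |ε| * (C₄ + 1) := rfl
      _ ≤ c := hε2
  have h4 : ε^2 = |ε| * |ε| := by rw [← sq_abs, sq]
  calc ‖Y ε t₀ - Y 0 t₀ - ε • ψ t₀‖ ≤ ε^2 * C₄ := hk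
    _ ≤ |ε| * c := by nlinarith [abs_nonneg ε, mul_nonneg (abs_nonneg ε) (abs_nonneg ε)]
    _ = c * |ε| := mul_comm _ _
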